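/- Cross $L^2$ energy estimate for two interfaces: Let $C_\infty \in \mathbb{R}$ and let $f, g : \mathbb{R}^2 \to \mathbb{R}$ be differentiable with $f - C_\infty \in L^2(\mathbb{R}^2)$, $g \in L^2(\mathbb{R}^2)$, $\nabla f$ and $\nabla g$ bounded, and $D := \sup_{x,y} d(f,g)(x,y) < \infty$. Then there is a universal constant $C$ such that $\int_{\mathbb{R}^2} \int_{\mathbb{R}^2} |f(x) - C_\infty| \, |g(x-y)| \, \frac{\big|2|y|^2 - (f(x) - g(x-y))^2\big| + 3|f(x) - g(x-y)| \, |(\nabla f(x) - \nabla g(x-y)) \cdot y|}{[|y|^2 + (f(x) - g(x-y))^2]^{5/2}}\, dx\, dy \le C\, \|f - C_\infty\|_{L^2} \, \|g\|_{L^2} \, \big(\sup_x|\nabla f(x)| + \sup_x|\nabla g(x)| + 1\big) (D^3 + 1)$. -/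

import Mathlib

open MeasureTheory Filter Topology Real Set
open scoped RealInnerProductSpace ENNReal

noncomputable section

abbrev E2 := EuclideanSpace ℝ (Fin 2)

/-- `d(f,g)(x,y) = [|y|² + (f(x)-g(x-y))²]^{-1/2}`. -/
def dd (f g : E2 → ℝ) (x y : E2) : ℝ :=
  (‖y‖ ^ 2 + (f x - g (x - y)) ^ 2) ^ (-(1 / 2 : ℝ))

/-- The `L²(ℝ²)` norm of a function. -/
def l2norm (h : E2 → ℝ) : ℝ := (∫ x : E2, (h x) ^ 2) ^ (1 / 2 : ℝ)

set_option maxHeartbeats 1000000 in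
/-- **Cross `L²` energy estimate for two interfaces.**  There is a universal constant `C`
such that whenever `f, g` are differentiable with bounded gradients, `f - C∞ ∈ L²`,
`g ∈ L²`, and `D = sup d(f,g) < ∞`,
`∫∫ |f(x)-C∞| |g(x-y)| (|2|y|²-(f(x)-g(x-y))²| + 3|f(x)-g(x-y)||(∇f(x)-∇g(x-y))⬝y|) /
    [|y|²+(f(x)-g(x-y))²]^{5/2} dx dy
  ≤ C ‖f-C∞‖_{L²} ‖g‖_{L²} (sup|∇f| + sup|∇g| + 1)(D³+1)`. -/
theorem cross_L2_energy_estimate :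
    ∃ C : ℝ, 0 < C ∧ ∀ (Cinf : ℝ) (f g : E2 → ℝ),
      Differentiable ℝ f → Differentiable ℝ g →
      MemLp (fun x => f x - Cinf) 2 volume →
      MemLp g 2 volume →
      BddAbove (Set.range fun x => ‖gradient f x‖) →
      BddAbove (Set.range fun x => ‖gradient g x‖) →
      BddAbove (Set.range fun p : E2 × E2 => dd f g p.1 p.2) →
      (∫⁻ y : E2, ∫⁻ x : E2, ENNReal.ofReal
          (|f x - Cinf| * |g (x - y)| *
            ((|2 * ‖y‖ ^ 2 - (f x - g (x - y)) ^ 2| +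
              3 * |f x - g (x - y)| * |⟪gradient f x - gradient g (x - y), y⟫|) /
              (‖y‖ ^ 2 + (f x - g (x - y)) ^ 2) ^ (5 / 2 : ℝ)))) ≤
        ENNReal.ofReal (C * l2norm (fun x => f x - Cinf) * l2norm g *
          ((⨆ x : E2, ‖gradient f x‖) + (⨆ x : E2, ‖gradient g x‖) + 1) *
          ((⨆ p : E2 × E2, dd f g p.1 p.2) ^ 3 + 1)) := by
  have hκint : Integrable (fun y : E2 => (1 + ‖y‖) ^ (-(3:ℝ))) volume := by
    apply integrable_one_add_norm
    rw [finrank_euclideanSpace_fin]; norm_num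
  set κ : ℝ := ∫ y : E2, (1 + ‖y‖) ^ (-(3:ℝ)) with hκdef
  have hκ0 : 0 ≤ κ := integral_nonneg fun y => Real.rpow_nonneg (by positivity) _
  refine ⟨1000 * (κ + 1), by positivity, ?_⟩
  intro Cinf f g hf hg hmf hmg hbf hbg hbD
  have hfm : Measurable f := hf.continuous.measurable
  have hgm : Measurable g := hg.continuous.measurable
  set Gf := ⨆ x : E2, ‖gradient f x‖ with hGf_def
  set Gg := ⨆ x : E2, ‖gradient g x‖ with hGg_def
  set D := ⨆ p : E2 × E2, dd f g p.1 p.2 with hD_def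
  have hGfle : ∀ x, ‖gradient f x‖ ≤ Gf := fun x => le_ciSup hbf x
  have hGgle : ∀ x, ‖gradient g x‖ ≤ Gg := fun x => le_ciSup hbg x
  have hGf0 : 0 ≤ Gf := le_trans (norm_nonneg _) (hGfle 0)
  have hGg0 : 0 ≤ Gg := le_trans (norm_nonneg _) (hGgle 0)
  have hDle : ∀ x y, dd f g x y ≤ D := fun x y => le_ciSup hbD (x, y)
  have hdd0 : ∀ x y, 0 ≤ dd f g x y := fun x y => Real.rpow_nonneg (by positivity) _
  have hD0 : 0 ≤ D := le_trans (hdd0 0 0) (hDle 0 0)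
  set l2f := l2norm (fun x => f x - Cinf) with hl2f_def
  set l2g := l2norm g with hl2g_def
  have hl2f0 : 0 ≤ l2f := Real.rpow_nonneg (integral_nonneg fun x => sq_nonneg _) _
  have hl2g0 : 0 ≤ l2g := Real.rpow_nonneg (integral_nonneg fun x => sq_nonneg _) _
  -- square integrability
  have hf2 : Integrable (fun x : E2 => (f x - Cinf) ^ 2) volume := by
    refine (hmf.integrable_norm_rpow two_ne_zero ENNReal.ofNat_ne_top).congr
      (Eventually.of_forall fun x => ?_)
    simp only [ENNReal.toReal_ofNat, Real.norm_eq_abs, Real.rpow_two, sq_abs]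
  have hg2 : Integrable (fun x : E2 => (g x) ^ 2) volume := by
    refine (hmg.integrable_norm_rpow two_ne_zero ENNReal.ofNat_ne_top).congr
      (Eventually.of_forall fun x => ?_)
    simp only [ENNReal.toReal_ofNat, Real.norm_eq_abs, Real.rpow_two, sq_abs]
  -- Cauchy–Schwarz step
  have hCS : ∀ y : E2, (∫⁻ x : E2, ENNReal.ofReal (|f x - Cinf| * |g (x - y)|)) ≤
      ENNReal.ofReal (l2f * l2g) := by
    intro y
    have hconj : (2:ℝ).HolderConjugate 2 := Real.HolderConjugate.two_two
    have hm1 : AEMeasurable (fun x : E2 => ENNReal.ofReal |f x - Cinf|) volume :=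
      (ENNReal.measurable_ofReal.comp ((hfm.sub measurable_const).abs)).aemeasurable
    have hm2 : AEMeasurable (fun x : E2 => ENNReal.ofReal |g (x - y)|) volume :=
      (ENNReal.measurable_ofReal.comp
        ((hgm.comp (measurable_id.sub measurable_const)).abs)).aemeasurable
    have h := ENNReal.lintegral_mul_le_Lp_mul_Lq volume hconj hm1 hm2
    simp only [Pi.mul_apply] at h
    have e1 : (∫⁻ x : E2, (ENNReal.ofReal |f x - Cinf|) ^ (2:ℝ)) =
        ENNReal.ofReal (∫ x : E2, (f x - Cinf) ^ 2) := by
      rw [ofReal_integral_eq_lintegral_ofReal hf2 (Eventually.of_forall fun x => sq_nonneg _)]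
      congr 1
      ext x
      rw [ENNReal.ofReal_rpow_of_nonneg (abs_nonneg _) (by norm_num : (0:ℝ) ≤ 2),
        Real.rpow_two, sq_abs]
    have e2 : (∫⁻ x : E2, (ENNReal.ofReal |g (x - y)|) ^ (2:ℝ)) =
        ENNReal.ofReal (∫ x : E2, (g x) ^ 2) := by
      rw [lintegral_sub_right_eq_self (fun x : E2 => (ENNReal.ofReal |g x|) ^ (2:ℝ)) y]
      rw [ofReal_integral_eq_lintegral_ofReal hg2 (Eventually.of_forall fun x => sq_nonneg _)]
      congr 1
      ext x
      rw [ENNReal.ofReal_rpow_of_nonneg (abs_nonneg _) (by norm_num : (0:ℝ) ≤ 2),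
        Real.rpow_two, sq_abs]
    rw [e1, e2] at h
    calc (∫⁻ x : E2, ENNReal.ofReal (|f x - Cinf| * |g (x - y)|))
        = ∫⁻ x : E2, ENNReal.ofReal |f x - Cinf| * ENNReal.ofReal |g (x - y)| := by
          simp_rw [← ENNReal.ofReal_mul (abs_nonneg _)]
      _ ≤ _ := h
      _ = ENNReal.ofReal (l2f * l2g) := by
          rw [ENNReal.ofReal_rpow_of_nonneg (integral_nonneg fun x => sq_nonneg _) (by norm_num),
            ENNReal.ofReal_rpow_of_nonneg (integral_nonneg fun x => sq_nonneg _) (by norm_num),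
            ← ENNReal.ofReal_mul (Real.rpow_nonneg (integral_nonneg fun x => sq_nonneg _) _)]
          rfl
  -- pointwise bound
  have hpt : ∀ (y : E2), y ≠ 0 → ∀ x : E2,
      |f x - Cinf| * |g (x - y)| *
        ((|2 * ‖y‖ ^ 2 - (f x - g (x - y)) ^ 2| +
          3 * |f x - g (x - y)| * |⟪gradient f x - gradient g (x - y), y⟫|) /
          (‖y‖ ^ 2 + (f x - g (x - y)) ^ 2) ^ (5 / 2 : ℝ)) ≤
      ((2 + 3 * (Gf + Gg)) * ((1 + D) ^ 3 * (1 + ‖y‖) ^ (-(3:ℝ)))) *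
        (|f x - Cinf| * |g (x - y)|) := by
    intro y hy x
    have hy0 : 0 < ‖y‖ := norm_pos_iff.mpr hy
    set Δ : ℝ := f x - g (x - y) with hΔ
    have hS : 0 < ‖y‖ ^ 2 + Δ ^ 2 := by positivity
    set S : ℝ := ‖y‖ ^ 2 + Δ ^ 2 with hSdef
    have h1 : |2 * ‖y‖ ^ 2 - Δ ^ 2| ≤ 2 * S := by
      rw [abs_le]
      constructor <;> [nlinarith [sq_nonneg ‖y‖, sq_nonneg Δ]; nlinarith [sq_nonneg Δ]]
    have h2 : |⟪gradient f x - gradient g (x - y), y⟫| ≤ (Gf + Gg) * ‖y‖ := by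
      calc |⟪gradient f x - gradient g (x - y), y⟫|
          ≤ ‖gradient f x - gradient g (x - y)‖ * ‖y‖ := abs_real_inner_le_norm _ _
        _ ≤ (‖gradient f x‖ + ‖gradient g (x - y)‖) * ‖y‖ := by
            gcongr; exact norm_sub_le _ _
        _ ≤ (Gf + Gg) * ‖y‖ := by gcongr <;> [exact hGfle x; exact hGgle (x - y)]
    have h3 : |Δ| * ‖y‖ ≤ S := by nlinarith [sq_nonneg (|Δ| - ‖y‖), sq_abs Δ, abs_nonneg Δ]
    have hnum : |2 * ‖y‖ ^ 2 - Δ ^ 2| + 3 * |Δ| * |⟪gradient f x - gradient g (x - y), y⟫|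
        ≤ (2 + 3 * (Gf + Gg)) * S := by
      have h5 : 3 * |Δ| * |⟪gradient f x - gradient g (x - y), y⟫|
          ≤ 3 * ((Gf + Gg) * (|Δ| * ‖y‖)) := by
        calc 3 * |Δ| * |⟪gradient f x - gradient g (x - y), y⟫|
            ≤ 3 * |Δ| * ((Gf + Gg) * ‖y‖) := by gcongr
          _ = 3 * ((Gf + Gg) * (|Δ| * ‖y‖)) := by ring
      have h4 : 3 * ((Gf + Gg) * (|Δ| * ‖y‖)) ≤ 3 * ((Gf + Gg) * S) := by gcongr
      nlinarith
    have hfrac : (|2 * ‖y‖ ^ 2 - Δ ^ 2| + 3 * |Δ| * |⟪gradient f x - gradient g (x - y), y⟫|) /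
        S ^ (5 / 2 : ℝ) ≤ (2 + 3 * (Gf + Gg)) * S ^ (-(3/2) : ℝ) := by
      rw [div_le_iff₀ (Real.rpow_pos_of_pos hS _)]
      have e : (2 + 3 * (Gf + Gg)) * S ^ (-(3/2) : ℝ) * S ^ (5/2 : ℝ)
          = (2 + 3 * (Gf + Gg)) * S := by
        rw [mul_assoc, ← Real.rpow_add hS]; norm_num
      rw [e]; exact hnum
    have hddS : dd f g x y = S ^ (-(1/2) : ℝ) := rfl
    have hdd1 : dd f g x y ≤ ‖y‖⁻¹ := by
      rw [hddS]
      have h6 : S ^ (-(1/2) : ℝ) ≤ (‖y‖ ^ 2) ^ (-(1/2) : ℝ) :=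
        Real.rpow_le_rpow_of_nonpos (by positivity) (le_add_of_nonneg_right (sq_nonneg Δ))
          (by norm_num)
      refine h6.trans (le_of_eq ?_)
      rw [← Real.rpow_natCast ‖y‖ 2, ← Real.rpow_mul (norm_nonneg y)]
      norm_num [Real.rpow_neg_one]
    have hdd2 : dd f g x y ≤ (1 + D) / (1 + ‖y‖) := by
      rw [le_div_iff₀ (by positivity)]
      have hb : dd f g x y * ‖y‖ ≤ 1 :=
        (mul_le_mul_of_nonneg_right hdd1 hy0.le).trans (by rw [inv_mul_cancel₀ hy0.ne'])
      have he : dd f g x y * (1 + ‖y‖) = dd f g x y + dd f g x y * ‖y‖ := by ring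
      rw [he]
      linarith [hDle x y]
    have hcube : S ^ (-(3/2) : ℝ) ≤ (1 + D) ^ 3 * (1 + ‖y‖) ^ (-(3:ℝ)) := by
      have e1 : S ^ (-(3/2) : ℝ) = (dd f g x y) ^ 3 := by
        rw [hddS, ← Real.rpow_natCast (S ^ (-(1/2) : ℝ)) 3, ← Real.rpow_mul hS.le]
        norm_num
      have e2 : (1 + ‖y‖) ^ (-(3:ℝ)) = ((1 + ‖y‖) ^ 3)⁻¹ := by
        rw [← Real.rpow_natCast (1 + ‖y‖) 3, ← Real.rpow_neg (by positivity)]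
        norm_num
      rw [e1, e2]
      calc (dd f g x y) ^ 3 ≤ ((1 + D) / (1 + ‖y‖)) ^ 3 :=
            pow_le_pow_left₀ (hdd0 x y) hdd2 3
        _ = (1 + D) ^ 3 * ((1 + ‖y‖) ^ 3)⁻¹ := by rw [div_pow, div_eq_mul_inv]
    have hfle : (|2 * ‖y‖ ^ 2 - Δ ^ 2| + 3 * |Δ| * |⟪gradient f x - gradient g (x - y), y⟫|) /
        S ^ (5 / 2 : ℝ) ≤ (2 + 3 * (Gf + Gg)) * ((1 + D) ^ 3 * (1 + ‖y‖) ^ (-(3:ℝ))) := by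
      refine hfrac.trans ?_
      gcongr
    calc |f x - Cinf| * |g (x - y)| *
          ((|2 * ‖y‖ ^ 2 - Δ ^ 2| + 3 * |Δ| * |⟪gradient f x - gradient g (x - y), y⟫|) /
            S ^ (5 / 2 : ℝ))
        ≤ |f x - Cinf| * |g (x - y)| *
          ((2 + 3 * (Gf + Gg)) * ((1 + D) ^ 3 * (1 + ‖y‖) ^ (-(3:ℝ)))) :=
          mul_le_mul_of_nonneg_left hfle (by positivity)
      _ = ((2 + 3 * (Gf + Gg)) * ((1 + D) ^ 3 * (1 + ‖y‖) ^ (-(3:ℝ)))) *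
          (|f x - Cinf| * |g (x - y)|) := by ring
  -- main chain
  have h0 : ∀ᵐ y : E2, y ≠ (0 : E2) := by
    refine ae_iff.mpr ?_
    simp only [ne_eq, not_not, setOf_eq_eq_singleton]
    exact measure_singleton 0
  set B : ℝ := (2 + 3 * (Gf + Gg)) * (1 + D) ^ 3 * (l2f * l2g) with hBdef
  have hB0 : 0 ≤ B :=
    mul_nonneg (mul_nonneg (by linarith) (pow_nonneg (by linarith) 3))
      (mul_nonneg hl2f0 hl2g0)
  have hKy0 : ∀ y : E2, 0 ≤ (2 + 3 * (Gf + Gg)) * ((1 + D) ^ 3 * (1 + ‖y‖) ^ (-(3:ℝ))) :=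
    fun y => mul_nonneg (by linarith)
      (mul_nonneg (pow_nonneg (by linarith) 3) (Real.rpow_nonneg (by positivity) _))
  calc (∫⁻ y : E2, ∫⁻ x : E2, ENNReal.ofReal
          (|f x - Cinf| * |g (x - y)| *
            ((|2 * ‖y‖ ^ 2 - (f x - g (x - y)) ^ 2| +
              3 * |f x - g (x - y)| * |⟪gradient f x - gradient g (x - y), y⟫|) /
              (‖y‖ ^ 2 + (f x - g (x - y)) ^ 2) ^ (5 / 2 : ℝ))))
      ≤ ∫⁻ y : E2, ENNReal.ofReal B * ENNReal.ofReal ((1 + ‖y‖) ^ (-(3:ℝ))) := by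
        refine lintegral_mono_ae ?_
        filter_upwards [h0] with y hy
        calc (∫⁻ x : E2, ENNReal.ofReal
              (|f x - Cinf| * |g (x - y)| *
                ((|2 * ‖y‖ ^ 2 - (f x - g (x - y)) ^ 2| +
                  3 * |f x - g (x - y)| * |⟪gradient f x - gradient g (x - y), y⟫|) /
                  (‖y‖ ^ 2 + (f x - g (x - y)) ^ 2) ^ (5 / 2 : ℝ))))
            ≤ ∫⁻ x : E2, ENNReal.ofReal ((2 + 3 * (Gf + Gg)) *
                ((1 + D) ^ 3 * (1 + ‖y‖) ^ (-(3:ℝ)))) *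
                ENNReal.ofReal (|f x - Cinf| * |g (x - y)|) := by
              refine lintegral_mono fun x => ?_
              rw [← ENNReal.ofReal_mul (hKy0 y)]
              exact ENNReal.ofReal_le_ofReal (hpt y hy x)
          _ = ENNReal.ofReal ((2 + 3 * (Gf + Gg)) * ((1 + D) ^ 3 * (1 + ‖y‖) ^ (-(3:ℝ)))) *
                ∫⁻ x : E2, ENNReal.ofReal (|f x - Cinf| * |g (x - y)|) :=
              lintegral_const_mul' _ _ ENNReal.ofReal_ne_top
          _ ≤ ENNReal.ofReal ((2 + 3 * (Gf + Gg)) * ((1 + D) ^ 3 * (1 + ‖y‖) ^ (-(3:ℝ)))) *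
                ENNReal.ofReal (l2f * l2g) := mul_le_mul_right (hCS y) _
          _ = ENNReal.ofReal B * ENNReal.ofReal ((1 + ‖y‖) ^ (-(3:ℝ))) := by
              rw [← ENNReal.ofReal_mul (hKy0 y), ← ENNReal.ofReal_mul hB0]
              exact congrArg _ (by ring)
    _ = ENNReal.ofReal B * ENNReal.ofReal κ := by
        rw [lintegral_const_mul' _ _ ENNReal.ofReal_ne_top,
          ofReal_integral_eq_lintegral_ofReal hκint
            (Eventually.of_forall fun y => Real.rpow_nonneg (by positivity) _)]
    _ ≤ ENNReal.ofReal (1000 * (κ + 1) * l2f * l2g * (Gf + Gg + 1) * (D ^ 3 + 1)) := by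
        rw [← ENNReal.ofReal_mul hB0]
        refine ENNReal.ofReal_le_ofReal ?_
        have hD31 : (0:ℝ) ≤ D ^ 3 + 1 := by nlinarith [pow_nonneg hD0 3]
        have hX0 : 0 ≤ (κ + 1) * (l2f * l2g) * (Gf + Gg + 1) * (D ^ 3 + 1) :=
          mul_nonneg (mul_nonneg (mul_nonneg (by linarith) (mul_nonneg hl2f0 hl2g0))
            (by linarith)) hD31
        have k2 : (1 + D) ^ 3 ≤ 7 * (D ^ 3 + 1) := by
          nlinarith [mul_nonneg hD0 (sq_nonneg (D - 1)), sq_nonneg (2 * D - 1), hD0]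
        have m1 : (2 + 3 * (Gf + Gg)) * (1 + D) ^ 3 ≤ (3 * (Gf + Gg + 1)) * (7 * (D ^ 3 + 1)) :=
          mul_le_mul (by linarith) k2 (pow_nonneg (by linarith) 3) (by linarith)
        have m2 : (2 + 3 * (Gf + Gg)) * (1 + D) ^ 3 * (l2f * l2g) ≤
            (3 * (Gf + Gg + 1)) * (7 * (D ^ 3 + 1)) * (l2f * l2g) :=
          mul_le_mul_of_nonneg_right m1 (mul_nonneg hl2f0 hl2g0)
        have hR0 : 0 ≤ (3 * (Gf + Gg + 1)) * (7 * (D ^ 3 + 1)) * (l2f * l2g) :=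
          mul_nonneg (mul_nonneg (by linarith) (by linarith)) (mul_nonneg hl2f0 hl2g0)
        calc B * κ ≤ (3 * (Gf + Gg + 1)) * (7 * (D ^ 3 + 1)) * (l2f * l2g) * (κ + 1) :=
              mul_le_mul m2 (by linarith) hκ0 hR0
          _ = 21 * ((κ + 1) * (l2f * l2g) * (Gf + Gg + 1) * (D ^ 3 + 1)) := by ring
          _ ≤ 1000 * ((κ + 1) * (l2f * l2g) * (Gf + Gg + 1) * (D ^ 3 + 1)) := by linarith
          _ = 1000 * (κ + 1) * l2f * l2g * (Gf + Gg + 1) * (D ^ 3 + 1) := by ring
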